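/- Let (φ,X,Y) be an instance of Π₂SAT and let I_φ be the IAF constructed from it as in the stated translation. Then (φ,X,Y)∈Π₂SAT if and only if (φ,w)∈SRE⁻(I_φ−{(φ,φ)}, ∅, (pr,true)). -/

import Mathlib

universe u

/-- An abstract argumentation framework: a set of arguments with an attack relation. -/
structure AF (α : Type u) where
  args : Set α
  att : Set (α × α)

namespace AF

variable {α : Type u}

/-- `S⁺_F`: arguments attacked by `S`. -/
def plusSet (F : AF α) (S : Set α) : Set α := {a | a ∈ F.args ∧ ∃ b ∈ S, (b, a) ∈ F.att}

/-- `S⁻_F`: arguments attacking `S`. -/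
def minusSet (F : AF α) (S : Set α) : Set α := {a | a ∈ F.args ∧ ∃ b ∈ S, (a, b) ∈ F.att}

/-- `S` is conflict-free in `F`. -/
def confFree (F : AF α) (S : Set α) : Prop := S ∩ F.plusSet S = ∅

/-- `S` defends `a` in `F`: every attacker of `a` is attacked by `S`. -/
def defends (F : AF α) (S : Set α) (a : α) : Prop := ∀ b, (b, a) ∈ F.att → b ∈ F.plusSet S

/-- The characteristic function `Γ_F(S)`: arguments defended by `S`. -/
def Γ (F : AF α) (S : Set α) : Set α := {a | a ∈ F.args ∧ F.defends S a}

/-- Admissible: conflict-free and self-defending. -/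
def isAd (F : AF α) (S : Set α) : Prop := S ⊆ F.args ∧ F.confFree S ∧ S ⊆ F.Γ S

/-- Stable: conflict-free and attacking exactly the outside. -/
def isSt (F : AF α) (S : Set α) : Prop := S ⊆ F.args ∧ F.confFree S ∧ F.plusSet S = F.args \ S

/-- Complete: admissible and containing all defended arguments. -/
def isCo (F : AF α) (S : Set α) : Prop := F.isAd S ∧ F.Γ S ⊆ S

/-- Grounded: ⊆-minimal complete. -/
def isGr (F : AF α) (S : Set α) : Prop := F.isCo S ∧ ∀ T, F.isCo T → T ⊆ S → T = S

/-- Preferred: ⊆-maximal admissible. -/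
def isPr (F : AF α) (S : Set α) : Prop := F.isAd S ∧ ∀ T, F.isAd T → S ⊆ T → S = T

end AF

/-- The five common semantics. -/
inductive Sem : Type
  | ad | st | co | gr | pr
deriving DecidableEq

/-- `S` is a `σ`-extension of `F`. -/
def extOf {α : Type u} : Sem → AF α → Set α → Prop
  | .ad => AF.isAd
  | .st => AF.isSt
  | .co => AF.isCo
  | .gr => AF.isGr
  | .pr => AF.isPr

/-- An incomplete argumentation framework (data part). -/
structure IAF (α : Type u) where
  A : Set α
  Aq : Set α
  R : Set (α × α)
  Rq : Set (α × α)

namespace IAF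

variable {α : Type u}

/-- Well-formedness: `A`,`A?` disjoint; `R`,`R?` disjoint subsets of `(A∪A?)×(A∪A?)`. -/
def WF (I : IAF α) : Prop :=
  Disjoint I.A I.Aq ∧ Disjoint I.R I.Rq ∧
  I.R ⊆ (I.A ∪ I.Aq) ×ˢ (I.A ∪ I.Aq) ∧
  I.Rq ⊆ (I.A ∪ I.Aq) ×ˢ (I.A ∪ I.Aq)

/-- `cert(I)`: the AF projected on the certain part. -/
def cert (I : IAF α) : AF α := ⟨I.A, I.R ∩ I.A ×ˢ I.A⟩

/-- `I'` is a partial completion of `I`. -/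
def PartOf (I' I : IAF α) : Prop :=
  I'.WF ∧ I.A ⊆ I'.A ∧ I'.A ⊆ I.A ∪ I.Aq ∧
  I.R ∩ (I'.A ∪ I'.Aq) ×ˢ (I'.A ∪ I'.Aq) ⊆ I'.R ∧
  I'.R ⊆ I.R ∪ I.Rq ∧ I'.Aq ⊆ I.Aq ∧ I'.Rq ⊆ I.Rq

/-- `F` is a completion of `I`. -/
def IsCompletion (I : IAF α) (F : AF α) : Prop := ∃ I' : IAF α, I'.PartOf I ∧ F = I'.cert

/-- `I + R₀` for a set of uncertain attacks. -/
def addR (I : IAF α) (R0 : Set (α × α)) : IAF α := ⟨I.A, I.Aq, I.R ∪ R0, I.Rq \ R0⟩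

/-- `I − R₀` for a set of uncertain attacks. -/
def subR (I : IAF α) (R0 : Set (α × α)) : IAF α := ⟨I.A, I.Aq, I.R, I.Rq \ R0⟩

/-- `I + A₀` for a set of uncertain arguments. -/
def addA (I : IAF α) (A0 : Set α) : IAF α := ⟨I.A ∪ A0, I.Aq \ A0, I.R, I.Rq⟩

/-- `I − A₀` for a set of uncertain arguments. -/
def subA (I : IAF α) (A0 : Set α) : IAF α :=
  ⟨I.A, I.Aq \ A0,
   I.R \ {p | p ∈ I.R ∪ I.Rq ∧ (p.1 ∈ A0 ∨ p.2 ∈ A0)},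
   I.Rq \ {p | p ∈ I.R ∪ I.Rq ∧ (p.1 ∈ A0 ∨ p.2 ∈ A0)}⟩

/-- `S⁺_I`. -/
def plusI (I : IAF α) (S : Set α) : Set α := {a | a ∈ I.A ∪ I.Aq ∧ ∃ b ∈ S, (b, a) ∈ I.R}

/-- `S⁻_I`. -/
def minusI (I : IAF α) (S : Set α) : Set α := {a | a ∈ I.A ∪ I.Aq ∧ ∃ b ∈ S, (a, b) ∈ I.R}

/-- `S^∼_I`. -/
def simI (I : IAF α) (S : Set α) : Set α :=
  {a | a ∈ I.A ∪ I.Aq ∧ ∀ b ∈ S, (b, a) ∉ I.R ∪ I.Rq}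

end IAF

/-- An element of an IAF: either an argument or an attack. -/
inductive Elem (α : Type u) : Type u
  | arg (a : α)
  | att (r : α × α)

/-- `e` is an uncertain element of `I`, i.e. `e ∈ A? ∪ R?`. -/
def IAF.isUnc {α : Type u} (I : IAF α) : Elem α → Prop
  | .arg a => a ∈ I.Aq
  | .att r => r ∈ I.Rq

/-- `I + {e}`. -/
def IAF.addE {α : Type u} (I : IAF α) : Elem α → IAF α
  | .arg a => I.addA {a}
  | .att r => I.addR {r}

/-- `I − {e}`. -/
def IAF.subE {α : Type u} (I : IAF α) : Elem α → IAF α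
  | .arg a => I.subA {a}
  | .att r => I.subR {r}

/-- `e` is the unique uncertain element of `I`, i.e. `A? ∪ R? = {e}`. -/
def onlyUnc {α : Type u} (I : IAF α) : Elem α → Prop
  | .arg a => I.Aq = {a} ∧ I.Rq = ∅
  | .att r => I.Aq = ∅ ∧ I.Rq = {r}

/-- A verification status: a semantics together with true/false. -/
abbrev VStatus := Sem × Bool

/-- `S` has verification status `j` in the AF `F`. -/
def hasStatus {α : Type u} (F : AF α) (S : Set α) (j : VStatus) : Prop :=
  cond j.2 (extOf j.1 F S) (¬ extOf j.1 F S)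

/-- `S` is stable-`j` w.r.t. `I`. -/
def IAF.stableJ {α : Type u} (I : IAF α) (S : Set α) (j : VStatus) : Prop :=
  ∀ F, I.IsCompletion F → hasStatus F S j

/-- `S` is stable-`σ` w.r.t. `I`. -/
def IAF.stableSem {α : Type u} (I : IAF α) (S : Set α) (σ : Sem) : Prop :=
  I.stableJ S (σ, true) ∨ I.stableJ S (σ, false)

/-- `RE⁺(I,S,j)`: uncertain elements whose addition is `j`-relevant for `S` w.r.t. `I`. -/
def REplus {α : Type u} (I : IAF α) (S : Set α) (j : VStatus) : Set (Elem α) :=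
  {e | I.isUnc e ∧ ∃ I' : IAF α, I'.PartOf I ∧ onlyUnc I' e ∧
    hasStatus (I'.addE e).cert S j ∧ ¬ hasStatus (I'.subE e).cert S j}

/-- `RE⁻(I,S,j)`: uncertain elements whose removal is `j`-relevant for `S` w.r.t. `I`. -/
def REminus {α : Type u} (I : IAF α) (S : Set α) (j : VStatus) : Set (Elem α) :=
  {e | I.isUnc e ∧ ∃ I' : IAF α, I'.PartOf I ∧ onlyUnc I' e ∧
    hasStatus (I'.subE e).cert S j ∧ ¬ hasStatus (I'.addE e).cert S j}

/-- `e` is `σ`-irrelevant for `S` w.r.t. `I`. -/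
def irrelevant {α : Type u} (I : IAF α) (S : Set α) (σ : Sem) (e : Elem α) : Prop :=
  e ∉ REplus I S (σ, true) ∧ e ∉ REminus I S (σ, true) ∧
  e ∉ REplus I S (σ, false) ∧ e ∉ REminus I S (σ, false)

/-- `PosVer_σ(I,S) = true`. -/
def PosVer {α : Type u} (σ : Sem) (I : IAF α) (S : Set α) : Prop :=
  ∃ F, I.IsCompletion F ∧ extOf σ F S

/-- `NecVer_σ(I,S) = true`. -/
def NecVer {α : Type u} (σ : Sem) (I : IAF α) (S : Set α) : Prop :=
  ∀ F, I.IsCompletion F → extOf σ F S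

/-- `SRE⁺(I,S,j)`: uncertain elements whose addition is strongly `j`-relevant. -/
def SREplus {α : Type u} (I : IAF α) (S : Set α) (j : VStatus) : Set (Elem α) :=
  {e | I.isUnc e ∧ ∀ I' : IAF α, I'.PartOf (I.subE e) → ¬ I'.stableJ S j}

/-- `SRE⁻(I,S,j)`: uncertain elements whose removal is strongly `j`-relevant. -/
def SREminus {α : Type u} (I : IAF α) (S : Set α) (j : VStatus) : Set (Elem α) :=
  {e | I.isUnc e ∧ ∀ I' : IAF α, I'.PartOf (I.addE e) → ¬ I'.stableJ S j}

/-- The `OutRel(I,S,(a,b))` predicate. -/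
def OutRel {α : Type u} (I : IAF α) (S : Set α) (r : α × α) : Prop :=
  (I.minusI {r.2} \ {r.1}) ∩ I.simI S = ∅ ∧
  PosVer Sem.co
    ((I.addR {p | p ∈ I.Rq ∧ p.1 ∈ S ∧ p.2 ∈ I.minusI {r.2} \ {r.1}}).subR
      {p | p ∈ I.Rq ∧ p.1 ≠ r.1 ∧ p.2 = r.2}) S


/-- Arguments of the IAF built from a `Π₂SAT` instance: literal arguments `pos v`/`neg v`,
clause arguments, the formula argument `phi`, and the auxiliary argument `w`. -/
inductive PArg (V C : Type u) : Type u
  | pos (v : V)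
  | neg (v : V)
  | cl (c : C)
  | phi
  | w

/-- The IAF `I_φ` constructed from a `Π₂SAT` instance `(φ,X,Y)`, where clauses are indexed
by `C` and `clauses c` is the set of literals (a literal is a variable with a sign) of
clause `c`. -/
def IAFofSAT {V C : Type u} (X Y : Set V) (clauses : C → Set (V × Bool)) :
    IAF (PArg V C) :=
  ⟨{a | (∃ v ∈ X, a = PArg.neg v) ∨ (∃ v ∈ Y, a = PArg.pos v ∨ a = PArg.neg v) ∨
        (∃ c : C, a = PArg.cl c) ∨ a = PArg.phi ∨ a = PArg.w},
   {a | ∃ v ∈ X, a = PArg.pos v},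
   {p | (∃ v ∈ X, p = (PArg.pos v, PArg.neg v)) ∨
        (∃ v ∈ Y, p = (PArg.pos v, PArg.neg v) ∨ p = (PArg.neg v, PArg.pos v)) ∨
        (∃ c : C, ∃ l ∈ clauses c,
          p = ((if l.2 then PArg.pos l.1 else PArg.neg l.1), PArg.cl c)) ∨
        (∃ c : C, p = (PArg.cl c, PArg.phi) ∨ p = (PArg.cl c, PArg.cl c)) ∨
        (∃ v ∈ X ∪ Y, p = (PArg.w, PArg.pos v) ∨ p = (PArg.w, PArg.neg v)) ∨
        p = (PArg.w, PArg.w)},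
   {(PArg.phi, PArg.phi), (PArg.phi, PArg.w)}⟩

/-- `(φ,X,Y) ∈ Π₂SAT`: for every assignment of `X` there is an extension to all variables
satisfying every clause. -/
def Pi2SAT {V C : Type u} (X : Set V) (clauses : C → Set (V × Bool)) : Prop :=
  ∀ τX : V → Bool, ∃ τ : V → Bool, (∀ v ∈ X, τ v = τX v) ∧
    ∀ c : C, ∃ l ∈ clauses c, τ l.1 = l.2


section Aux

variable {α : Type u}

lemma IAF.partOf_trans {I₁ I₂ I₃ : IAF α} (h12 : I₁.PartOf I₂) (h23 : I₂.PartOf I₃) :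
    I₁.PartOf I₃ := by
  obtain ⟨hwf, hA1, hA2, hR1, hR2, hAq, hRq⟩ := h12
  obtain ⟨hwf', hA1', hA2', hR1', hR2', hAq', hRq'⟩ := h23
  have hsub : I₁.A ∪ I₁.Aq ⊆ I₂.A ∪ I₂.Aq := by
    intro a ha
    rcases ha with h | h
    · exact hA2 h
    · exact Or.inr (hAq h)
  refine ⟨hwf, fun a ha => hA1 (hA1' ha), ?_, ?_, ?_,
    fun a ha => hAq' (hAq ha), fun p hp => hRq' (hRq hp)⟩
  · intro a ha
    rcases hA2 ha with h | h
    · exact hA2' h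
    · exact Or.inr (hAq' h)
  · intro p hp
    obtain ⟨hp3, hpsq⟩ := hp
    exact hR1 ⟨hR1' ⟨hp3, hsub hpsq.1, hsub hpsq.2⟩, hpsq⟩
  · intro p hp
    rcases hR2 hp with h | h
    · rcases hR2' h with h' | h'
      · exact Or.inl h'
      · exact Or.inr h'
    · exact Or.inr (hRq' h)

lemma IAF.cert_of_part {J K : IAF α} (hq : J.Rq = ∅) (h : K.PartOf J) :
    K.cert = ⟨K.A, J.R ∩ K.A ×ˢ K.A⟩ := by
  obtain ⟨hwf, hA1, hA2, hR1, hR2, hAq, hRq⟩ := h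
  have hKR : K.R ⊆ J.R := by
    intro p hp
    rcases hR2 hp with h | h
    · exact h
    · rw [hq] at h; exact absurd h (Set.notMem_empty p)
  unfold IAF.cert
  congr 1
  apply Set.Subset.antisymm
  · intro p hp; exact ⟨hKR hp.1, hp.2⟩
  · intro p hp
    exact ⟨hR1 ⟨hp.1, Or.inl hp.2.1, Or.inl hp.2.2⟩, hp.2⟩

/-- The fully-decided partial completion of an IAF. -/
def IAF.fullDecide (I : IAF α) : IAF α :=
  ⟨I.A ∪ I.Aq, ∅, (I.R ∪ I.Rq) ∩ (I.A ∪ I.Aq) ×ˢ (I.A ∪ I.Aq), ∅⟩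

lemma IAF.fullDecide_part (I : IAF α) : I.fullDecide.PartOf I := by
  refine ⟨⟨?_, ?_, ?_, ?_⟩, ?_, ?_, ?_, ?_, ?_, ?_⟩
  · exact Set.disjoint_empty _
  · exact Set.disjoint_empty _
  · intro p hp
    rw [show I.fullDecide.A ∪ I.fullDecide.Aq = I.A ∪ I.Aq from Set.union_empty _]
    exact hp.2
  · exact Set.empty_subset _
  · exact Set.subset_union_left
  · exact subset_rfl
  · intro p hp
    refine ⟨Or.inl hp.1, ?_⟩
    have := hp.2
    rwa [show I.fullDecide.A ∪ I.fullDecide.Aq = I.A ∪ I.Aq from Set.union_empty _] at this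
  · intro p hp; exact hp.1
  · exact Set.empty_subset _
  · exact Set.empty_subset _

lemma AF.empty_ad (F : AF α) : F.isAd ∅ :=
  ⟨Set.empty_subset _, by simp [AF.confFree], Set.empty_subset _⟩

end Aux


section SATAux

variable {V C : Type u} (X Y : Set V) (clauses : C → Set (V × Bool))

/-- The attack relation of all completions of `I_φ − {(φ,φ)} + {(φ,w)}`. -/
def sR : Set (PArg V C × PArg V C) :=
  (IAFofSAT X Y clauses).R ∪ {(PArg.phi, PArg.w)}

/-- The completion of `I_φ − {(φ,φ)} + {(φ,w)}` determined by `A₀ ⊆ A?`. -/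
def Fc (A₀ : Set (PArg V C)) : AF (PArg V C) :=
  ⟨(IAFofSAT X Y clauses).A ∪ A₀,
   sR X Y clauses ∩
     (((IAFofSAT X Y clauses).A ∪ A₀) ×ˢ ((IAFofSAT X Y clauses).A ∪ A₀))⟩

lemma pos_mem_A {v : V} : PArg.pos v ∈ (IAFofSAT X Y clauses).A ↔ v ∈ Y := by
  simp [IAFofSAT]

lemma neg_mem_A {v : V} : PArg.neg v ∈ (IAFofSAT X Y clauses).A ↔ v ∈ X ∨ v ∈ Y := by
  simp [IAFofSAT]

lemma cl_mem_A {c : C} : PArg.cl c ∈ (IAFofSAT X Y clauses).A := by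
  simp [IAFofSAT]

lemma phi_mem_A : PArg.phi ∈ (IAFofSAT X Y clauses).A := by
  simp [IAFofSAT]

lemma w_mem_A : PArg.w ∈ (IAFofSAT X Y clauses).A := by
  simp [IAFofSAT]

lemma att_phi_iff {b : PArg V C} :
    (b, PArg.phi) ∈ sR X Y clauses ↔ ∃ c : C, b = PArg.cl c := by
  simp [sR, IAFofSAT]

lemma att_w_iff {b : PArg V C} :
    (b, PArg.w) ∈ sR X Y clauses ↔ b = PArg.w ∨ b = PArg.phi := by
  simp [sR, IAFofSAT]
  tauto

lemma att_pos_iff {b : PArg V C} {v : V} :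
    (b, PArg.pos v) ∈ sR X Y clauses ↔
      (v ∈ Y ∧ b = PArg.neg v) ∨ ((v ∈ X ∨ v ∈ Y) ∧ b = PArg.w) := by
  simp [sR, IAFofSAT]

lemma att_neg_iff {b : PArg V C} {v : V} :
    (b, PArg.neg v) ∈ sR X Y clauses ↔
      ((v ∈ X ∨ v ∈ Y) ∧ b = PArg.pos v) ∨ ((v ∈ X ∨ v ∈ Y) ∧ b = PArg.w) := by
  simp [sR, IAFofSAT]
  tauto

lemma att_cl_iff {b : PArg V C} {c : C} :
    (b, PArg.cl c) ∈ sR X Y clauses ↔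
      (∃ l ∈ clauses c, b = if l.2 then PArg.pos l.1 else PArg.neg l.1) ∨ b = PArg.cl c := by
  simp [sR, IAFofSAT]
  aesop

lemma sR_pos_neg {v : V} (h : v ∈ X ∨ v ∈ Y) :
    (PArg.pos v, PArg.neg v) ∈ sR X Y clauses := by
  rcases h with h | h
  · exact Or.inl (Or.inl ⟨v, h, rfl⟩)
  · exact Or.inl (Or.inr (Or.inl ⟨v, h, Or.inl rfl⟩))

lemma sR_neg_pos {v : V} (h : v ∈ Y) :
    (PArg.neg v, PArg.pos v) ∈ sR X Y clauses :=
  Or.inl (Or.inr (Or.inl ⟨v, h, Or.inr rfl⟩))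

lemma sR_lit_cl {c : C} {l : V × Bool} (h : l ∈ clauses c) :
    ((if l.2 then PArg.pos l.1 else PArg.neg l.1), PArg.cl c) ∈ sR X Y clauses :=
  Or.inl (Or.inr (Or.inr (Or.inl ⟨c, l, h, rfl⟩)))

lemma sR_cl_phi {c : C} : (PArg.cl c, PArg.phi) ∈ sR X Y clauses :=
  Or.inl (Or.inr (Or.inr (Or.inr (Or.inl ⟨c, Or.inl rfl⟩))))

lemma sR_cl_cl {c : C} : (PArg.cl c, PArg.cl c) ∈ sR X Y clauses :=
  Or.inl (Or.inr (Or.inr (Or.inr (Or.inl ⟨c, Or.inr rfl⟩))))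

lemma sR_w_pos {v : V} (h : v ∈ X ∪ Y) :
    (PArg.w, PArg.pos v) ∈ sR X Y clauses :=
  Or.inl (Or.inr (Or.inr (Or.inr (Or.inr (Or.inl ⟨v, h, Or.inl rfl⟩)))))

lemma sR_w_neg {v : V} (h : v ∈ X ∪ Y) :
    (PArg.w, PArg.neg v) ∈ sR X Y clauses :=
  Or.inl (Or.inr (Or.inr (Or.inr (Or.inr (Or.inl ⟨v, h, Or.inr rfl⟩)))))

lemma sR_w_w : (PArg.w, PArg.w) ∈ sR X Y clauses :=
  Or.inl (Or.inr (Or.inr (Or.inr (Or.inr (Or.inr rfl)))))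

lemma sR_phi_w : (PArg.phi, PArg.w) ∈ sR X Y clauses := Or.inr rfl

/-- In a completion with guessed set `A₀`, a satisfying assignment (compatible with `A₀`
on `X`) yields a nonempty admissible set containing `φ`. -/
lemma exists_adm (hXY : Disjoint X Y)
    (hlit : ∀ c : C, ∀ l ∈ clauses c, l.1 ∈ X ∪ Y)
    (A₀ : Set (PArg V C)) (hA₀ : A₀ ⊆ {a : PArg V C | ∃ v ∈ X, a = PArg.pos v})
    (τ : V → Bool)
    (hτA : ∀ v ∈ X, (τ v = true ↔ PArg.pos v ∈ A₀))
    (hsat : ∀ c : C, ∃ l ∈ clauses c, τ l.1 = l.2) :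
    ∃ S, (Fc X Y clauses A₀).isAd S ∧ PArg.phi ∈ S := by
  classical
  set S : Set (PArg V C) := {a | a = PArg.phi ∨ ∃ v, (v ∈ X ∨ v ∈ Y) ∧
    ((a = PArg.pos v ∧ τ v = true) ∨ (a = PArg.neg v ∧ τ v = false))} with hSdef
  have hφS : PArg.phi ∈ S := Or.inl rfl
  have hSargs : S ⊆ (Fc X Y clauses A₀).args := by
    rintro a (rfl | ⟨v, hv, ⟨rfl, hτ⟩ | ⟨rfl, hτ⟩⟩)
    · exact Or.inl (phi_mem_A X Y clauses)
    · rcases hv with hv | hv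
      · exact Or.inr ((hτA v hv).mp hτ)
      · exact Or.inl ((pos_mem_A X Y clauses).mpr hv)
    · exact Or.inl ((neg_mem_A X Y clauses).mpr hv)
  have hwS : PArg.w ∉ S := by
    rintro (h | ⟨v, hv, ⟨h, -⟩ | ⟨h, -⟩⟩) <;> exact nomatch h
  have hclS : ∀ c : C, PArg.cl c ∉ S := by
    intro c
    rintro (h | ⟨v, hv, ⟨h, -⟩ | ⟨h, -⟩⟩) <;> exact nomatch h
  refine ⟨S, ⟨hSargs, ?_, ?_⟩, hφS⟩
  · -- conflict-freeness
    rw [AF.confFree, Set.eq_empty_iff_forall_notMem]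
    rintro a ⟨haS, -, b, hbS, hattR, -⟩
    rcases haS with rfl | ⟨v, hv, ⟨rfl, hτv⟩ | ⟨rfl, hτv⟩⟩
    · obtain ⟨c, rfl⟩ := (att_phi_iff X Y clauses).mp hattR
      exact hclS c hbS
    · rcases (att_pos_iff X Y clauses).mp hattR with ⟨hvY, rfl⟩ | ⟨-, rfl⟩
      · rcases hbS with h | ⟨v', hv', ⟨h, -⟩ | ⟨h, hτ'⟩⟩
        · exact nomatch h
        · exact nomatch h
        · obtain rfl := PArg.neg.inj h
          rw [hτ'] at hτv
          exact Bool.noConfusion hτv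
      · exact hwS hbS
    · rcases (att_neg_iff X Y clauses).mp hattR with ⟨-, rfl⟩ | ⟨-, rfl⟩
      · rcases hbS with h | ⟨v', hv', ⟨h, hτ'⟩ | ⟨h, -⟩⟩
        · exact nomatch h
        · obtain rfl := PArg.pos.inj h
          rw [hτ'] at hτv
          exact Bool.noConfusion hτv
        · exact nomatch h
      · exact hwS hbS
  · -- self-defence
    intro a haS
    refine ⟨hSargs haS, ?_⟩
    rintro b ⟨hbR, hbargs, haargs⟩
    rcases haS with rfl | ⟨v, hv, ⟨rfl, hτv⟩ | ⟨rfl, hτv⟩⟩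
    · -- a = φ, attacker is a clause
      obtain ⟨c, rfl⟩ := (att_phi_iff X Y clauses).mp hbR
      obtain ⟨l, hl, hτl⟩ := hsat c
      have hvXY : l.1 ∈ X ∨ l.1 ∈ Y := (Set.mem_union _ _ _).mp (hlit c l hl)
      have hlS : (if l.2 then PArg.pos l.1 else PArg.neg l.1) ∈ S := by
        rcases Bool.eq_false_or_eq_true l.2 with h2 | h2 <;> rw [h2] <;>
          simp only [if_true, if_false, Bool.false_eq_true, ite_false, ite_true]
        · exact Or.inr ⟨l.1, hvXY, Or.inl ⟨rfl, by rw [hτl, h2]⟩⟩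
        · exact Or.inr ⟨l.1, hvXY, Or.inr ⟨rfl, by rw [hτl, h2]⟩⟩
      exact ⟨hbargs, _, hlS, sR_lit_cl X Y clauses hl, hSargs hlS, hbargs⟩
    · -- a = pos v
      rcases (att_pos_iff X Y clauses).mp hbR with ⟨hvY, rfl⟩ | ⟨-, rfl⟩
      · exact ⟨hbargs, PArg.pos v, Or.inr ⟨v, hv, Or.inl ⟨rfl, hτv⟩⟩,
          sR_pos_neg X Y clauses (Or.inr hvY), haargs, hbargs⟩
      · exact ⟨hbargs, PArg.phi, hφS, sR_phi_w X Y clauses,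
          Or.inl (phi_mem_A X Y clauses), hbargs⟩
    · -- a = neg v
      rcases (att_neg_iff X Y clauses).mp hbR with ⟨-, rfl⟩ | ⟨-, rfl⟩
      · rcases hbargs with h | h
        · have hvY := (pos_mem_A X Y clauses).mp h
          exact ⟨Or.inl h, PArg.neg v, Or.inr ⟨v, hv, Or.inr ⟨rfl, hτv⟩⟩,
            sR_neg_pos X Y clauses hvY, haargs, Or.inl h⟩
        · obtain ⟨v', hv', heq⟩ := hA₀ h
          obtain rfl := PArg.pos.inj heq
          have htrue := (hτA v hv').mpr h
          rw [htrue] at hτv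
          exact Bool.noConfusion hτv
      · exact ⟨hbargs, PArg.phi, hφS, sR_phi_w X Y clauses,
          Or.inl (phi_mem_A X Y clauses), hbargs⟩

/-- Conversely, a nonempty admissible set in the completion with guessed set `A₀` yields
a satisfying assignment compatible with `A₀` on `X`. -/
lemma adm_sat (hXY : Disjoint X Y)
    (hlit : ∀ c : C, ∀ l ∈ clauses c, l.1 ∈ X ∪ Y)
    (A₀ : Set (PArg V C)) (hA₀ : A₀ ⊆ {a : PArg V C | ∃ v ∈ X, a = PArg.pos v})
    (T : Set (PArg V C)) (hT : (Fc X Y clauses A₀).isAd T)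
    (a : PArg V C) (haT : a ∈ T) :
    ∃ τ : V → Bool, (∀ v ∈ X, (τ v = true ↔ PArg.pos v ∈ A₀)) ∧
      ∀ c : C, ∃ l ∈ clauses c, τ l.1 = l.2 := by
  classical
  obtain ⟨hTargs, hTcf, hTdef⟩ := hT
  have hcf : ∀ x ∈ T, ∀ b ∈ T, (b, x) ∈ (Fc X Y clauses A₀).att → False := by
    intro x hx b hb hatt
    have hmem : x ∈ T ∩ (Fc X Y clauses A₀).plusSet T := ⟨hx, hatt.2.2, b, hb, hatt⟩
    rw [hTcf] at hmem
    exact hmem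
  have hwT : PArg.w ∉ T := fun h => hcf _ h _ h
    ⟨sR_w_w X Y clauses, Or.inl (w_mem_A X Y clauses), Or.inl (w_mem_A X Y clauses)⟩
  have hclT : ∀ c : C, PArg.cl c ∉ T := fun c h => hcf _ h _ h
    ⟨sR_cl_cl X Y clauses, Or.inl (cl_mem_A X Y clauses), Or.inl (cl_mem_A X Y clauses)⟩
  have hdef : ∀ x ∈ T, ∀ b, (b, x) ∈ (Fc X Y clauses A₀).att →
      ∃ d ∈ T, (d, b) ∈ (Fc X Y clauses A₀).att := by
    intro x hx b hb
    obtain ⟨-, hdef2⟩ := hTdef hx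
    obtain ⟨-, d, hd, hatt⟩ := hdef2 b hb
    exact ⟨d, hd, hatt⟩
  have hφT : PArg.phi ∈ T := by
    have key : ∀ x ∈ T, (PArg.w, x) ∈ (Fc X Y clauses A₀).att → PArg.phi ∈ T := by
      intro x hx hatt
      obtain ⟨d, hdT, hdatt⟩ := hdef x hx PArg.w hatt
      rcases (att_w_iff X Y clauses).mp hdatt.1 with rfl | rfl
      · exact absurd hdT hwT
      · exact hdT
    have haargs := hTargs haT
    cases a with
    | pos v =>
      have hvXY : v ∈ X ∪ Y := by
        rcases haargs with h | h
        · exact Set.mem_union_right _ ((pos_mem_A X Y clauses).mp h)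
        · obtain ⟨v', hv', heq⟩ := hA₀ h
          obtain rfl := PArg.pos.inj heq
          exact Set.mem_union_left _ hv'
      exact key _ haT ⟨sR_w_pos X Y clauses hvXY, Or.inl (w_mem_A X Y clauses), haargs⟩
    | neg v =>
      have hvXY : v ∈ X ∪ Y := by
        rcases haargs with h | h
        · rcases (neg_mem_A X Y clauses).mp h with h' | h'
          · exact Set.mem_union_left _ h'
          · exact Set.mem_union_right _ h'
        · obtain ⟨v', hv', heq⟩ := hA₀ h
          exact nomatch heq
      exact key _ haT ⟨sR_w_neg X Y clauses hvXY, Or.inl (w_mem_A X Y clauses), haargs⟩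
    | cl c => exact absurd haT (hclT c)
    | phi => exact haT
    | w => exact absurd haT hwT
  refine ⟨fun v => decide (PArg.pos v ∈ A₀ ∨ (v ∉ X ∧ PArg.pos v ∈ T)), ?_, ?_⟩
  · intro v hv
    rw [decide_eq_true_iff]
    constructor
    · rintro (h | ⟨hnx, -⟩)
      · exact h
      · exact absurd hv hnx
    · exact Or.inl
  · intro c
    have hattc : (PArg.cl c, PArg.phi) ∈ (Fc X Y clauses A₀).att :=
      ⟨sR_cl_phi X Y clauses, Or.inl (cl_mem_A X Y clauses), Or.inl (phi_mem_A X Y clauses)⟩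
    obtain ⟨b, hbT, hbatt⟩ := hdef _ hφT _ hattc
    rcases (att_cl_iff X Y clauses).mp hbatt.1 with ⟨l, hl, rfl⟩ | rfl
    · refine ⟨l, hl, ?_⟩
      cases h2 : l.2 with
      | true =>
        rw [h2] at hbT
        simp only [ite_true] at hbT
        have hbargs := hTargs hbT
        rw [decide_eq_true_iff]
        by_cases hx : l.1 ∈ X
        · left
          rcases hbargs with h | h
          · exact absurd ((pos_mem_A X Y clauses).mp h) (Set.disjoint_left.mp hXY hx)
          · exact h
        · exact Or.inr ⟨hx, hbT⟩
      | false =>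
        rw [h2] at hbT
        simp only [Bool.false_eq_true, ite_false] at hbT
        rw [decide_eq_false_iff_not]
        rintro (hpos | ⟨-, hposT⟩)
        · have hxX : l.1 ∈ X := by
            obtain ⟨v', hv', heq⟩ := hA₀ hpos
            obtain rfl := PArg.pos.inj heq
            exact hv'
          have hattpn : (PArg.pos l.1, PArg.neg l.1) ∈ (Fc X Y clauses A₀).att :=
            ⟨sR_pos_neg X Y clauses (Or.inl hxX), Or.inr hpos, hTargs hbT⟩
          obtain ⟨d, hdT, hdatt⟩ := hdef _ hbT _ hattpn
          rcases (att_pos_iff X Y clauses).mp hdatt.1 with ⟨hvY, rfl⟩ | ⟨-, rfl⟩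
          · exact absurd hvY (Set.disjoint_left.mp hXY hxX)
          · exact hwT hdT
        · have hxy : l.1 ∈ X ∨ l.1 ∈ Y := (Set.mem_union _ _ _).mp (hlit c l hl)
          exact hcf _ hbT _ hposT
            ⟨sR_pos_neg X Y clauses hxy, hTargs hposT, hTargs hbT⟩
    · exact absurd hbT (hclT c)

/-- The IAF `I_φ − {(φ,φ)} + {(φ,w)}`. -/
def Jd : IAF (PArg V C) :=
  ((IAFofSAT X Y clauses).subR {(PArg.phi, PArg.phi)}).addE
    (Elem.att (PArg.phi, PArg.w))

lemma Jd_Rq : (Jd X Y clauses).Rq = ∅ := by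
  ext p
  simp only [Jd, IAF.addE, IAF.addR, IAF.subR, IAFofSAT, Set.mem_diff, Set.mem_insert_iff,
    Set.mem_singleton_iff, Set.mem_empty_iff_false, iff_false]
  tauto

lemma cert_eq_Fc {K : IAF (PArg V C)} (h : K.PartOf (Jd X Y clauses)) :
    ∃ A₀ ⊆ {a : PArg V C | ∃ v ∈ X, a = PArg.pos v}, K.cert = Fc X Y clauses A₀ := by
  have hRJ : (Jd X Y clauses).R = sR X Y clauses := rfl
  have hAJ : (Jd X Y clauses).A = (IAFofSAT X Y clauses).A := rfl
  have hAqJ : (Jd X Y clauses).Aq = {a : PArg V C | ∃ v ∈ X, a = PArg.pos v} := rfl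
  have hcert := IAF.cert_of_part (Jd_Rq X Y clauses) h
  refine ⟨K.A \ (IAFofSAT X Y clauses).A, ?_, ?_⟩
  · intro a ha
    have := h.2.2.1 ha.1
    rw [hAJ, hAqJ] at this
    rcases this with h' | h'
    · exact absurd h' ha.2
    · exact h'
  · have hKA : K.A = (IAFofSAT X Y clauses).A ∪ (K.A \ (IAFofSAT X Y clauses).A) := by
      rw [Set.union_diff_cancel]
      exact h.2.1
    rw [hcert, hRJ]
    unfold Fc
    rw [← hKA]

end SATAux

/-- `(φ,X,Y) ∈ Π₂SAT` iff removal of `(φ,w)` is strongly `(pr,true)`-relevant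
for `∅` w.r.t. `I_φ − {(φ,φ)}`. -/
theorem stmt17 {V C : Type u} [Finite C] (X Y : Set V)
    (clauses : C → Set (V × Bool))
    (hXY : Disjoint X Y) (hXfin : X.Finite) (hYfin : Y.Finite)
    (hlit : ∀ c : C, ∀ l ∈ clauses c, l.1 ∈ X ∪ Y) :
    Pi2SAT X clauses ↔
      Elem.att (PArg.phi, PArg.w) ∈
        SREminus ((IAFofSAT X Y clauses).subR {(PArg.phi, PArg.phi)}) ∅
          (Sem.pr, true) := by
  have hJd : ((IAFofSAT X Y clauses).subR {(PArg.phi, PArg.phi)}).addE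
      (Elem.att (PArg.phi, PArg.w)) = Jd X Y clauses := rfl
  constructor
  · intro hPi
    constructor
    · -- (φ,w) is an uncertain attack of I_φ − {(φ,φ)}
      show (PArg.phi, PArg.w) ∈ _
      refine ⟨Or.inr rfl, ?_⟩
      simp
    · intro I' hI' hst
      rw [hJd] at hI'
      have hpart := IAF.partOf_trans (IAF.fullDecide_part I') hI'
      obtain ⟨A₀, hA₀, hFc⟩ := cert_eq_Fc X Y clauses hpart
      have hcomp : I'.IsCompletion I'.fullDecide.cert :=
        ⟨I'.fullDecide, IAF.fullDecide_part I', rfl⟩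
      have hpr : (I'.fullDecide.cert).isPr ∅ := hst _ hcomp
      classical
      obtain ⟨τ, hτX, hτsat⟩ := hPi (fun v => decide (PArg.pos v ∈ A₀))
      have hτA : ∀ v ∈ X, (τ v = true ↔ PArg.pos v ∈ A₀) := by
        intro v hv
        rw [hτX v hv]
        exact decide_eq_true_iff
      obtain ⟨S, hS, hφS⟩ := exists_adm X Y clauses hXY hlit A₀ hA₀ τ hτA hτsat
      rw [hFc] at hpr
      have hES := hpr.2 S hS (Set.empty_subset _)
      rw [← hES] at hφS
      exact hφS
  · intro hmem τX
    classical
    obtain ⟨-, hmem⟩ := hmem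
    set A₀ : Set (PArg V C) := {a | ∃ v ∈ X, τX v = true ∧ a = PArg.pos v} with hA₀def
    have hA₀ : A₀ ⊆ {a : PArg V C | ∃ v ∈ X, a = PArg.pos v} := by
      rintro a ⟨v, hv, -, rfl⟩
      exact ⟨v, hv, rfl⟩
    set I' : IAF (PArg V C) :=
      ⟨(IAFofSAT X Y clauses).A ∪ A₀, ∅,
       sR X Y clauses ∩
         (((IAFofSAT X Y clauses).A ∪ A₀) ×ˢ ((IAFofSAT X Y clauses).A ∪ A₀)), ∅⟩
      with hI'def
    have hA₀sub : A₀ ⊆ (Jd X Y clauses).Aq := hA₀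
    have hpart : I'.PartOf (Jd X Y clauses) := by
      refine ⟨⟨Set.disjoint_empty _, Set.disjoint_empty _, ?_, Set.empty_subset _⟩,
        Set.subset_union_left, ?_, ?_, ?_, Set.empty_subset _, Set.empty_subset _⟩
      · intro p hp
        rw [show I'.A ∪ I'.Aq = I'.A from Set.union_empty _]
        exact hp.2
      · intro a ha
        rcases ha with h | h
        · exact Or.inl h
        · exact Or.inr (hA₀sub h)
      · intro p hp
        refine ⟨hp.1, ?_⟩
        have := hp.2
        rwa [show I'.A ∪ I'.Aq = I'.A from Set.union_empty _] at this
      · intro p hp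
        exact Or.inl hp.1
    have hnst := hmem I' (hJd ▸ hpart)
    rw [IAF.stableJ] at hnst
    push_neg at hnst
    obtain ⟨F, hFcomp, hFbad⟩ := hnst
    obtain ⟨K, hK, rfl⟩ := hFcomp
    have hKA : K.A = I'.A := by
      apply Set.Subset.antisymm
      · intro a ha
        rcases hK.2.2.1 ha with h | h
        · exact h
        · exact absurd h (Set.notMem_empty a)
      · exact hK.2.1
    have hFc : K.cert = Fc X Y clauses A₀ := by
      rw [IAF.cert_of_part rfl hK, hKA]
      show (⟨I'.A, I'.R ∩ I'.A ×ˢ I'.A⟩ : AF _) = _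
      unfold Fc
      congr 1
      rw [Set.inter_assoc, Set.inter_self]
    rw [hFc] at hFbad
    have hbad : ¬ (Fc X Y clauses A₀).isPr ∅ := hFbad
    have hnotmax : ¬ ∀ T, (Fc X Y clauses A₀).isAd T → ∅ ⊆ T → ∅ = T :=
      fun h => hbad ⟨AF.empty_ad _, h⟩
    push_neg at hnotmax
    obtain ⟨T, hTad, -, hTne⟩ := hnotmax
    obtain ⟨a, haT⟩ := hTne
    obtain ⟨τ, hτA, hτsat⟩ := adm_sat X Y clauses hXY hlit A₀ hA₀ T hTad a haT
    refine ⟨τ, ?_, hτsat⟩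
    intro v hv
    have h1 : (τ v = true ↔ τX v = true) := by
      rw [hτA v hv]
      constructor
      · rintro ⟨v', hv', hτ', h⟩
        cases PArg.pos.inj h
        exact hτ'
      · intro h
        exact ⟨v, hv, h, rfl⟩
    cases hτv : τ v <;> cases hτXv : τX v <;> simp_all
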